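/- Let n = 4k = sm with k and m odd and s even. Let f be a permutation of F_{2^s} that is differentially at most 6-uniform on F_{2^s}. Then the function F defined by F(x)=f(x) for x ∈ F_{2^s} and F(x)=x^{2^{2k}+2^k+1} for x ∉ F_{2^s} is a permutation of F_{2^n} with differential uniformity at most 6. -/

import Mathlib

/-- `delta f a b` is the number of `x` with `f (x + a) + f x = b`. -/
noncomputable def delta {F : Type*} [Field F] (f : F → F) (a b : F) : ℕ :=
  Nat.card {x : F // f (x + a) + f x = b}

/-- `deltaOn S f a b` is the number of `x ∈ S` with `f (x + a) + f x = b`. -/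
noncomputable def deltaOn {F : Type*} [Field F] (S : Set F) (f : F → F) (a b : F) : ℕ :=
  Nat.card {x : F // x ∈ S ∧ f (x + a) + f x = b}

lemma quad_roots {F : Type*} [Field F] (htwo : (2:F) = 0) (α β P₁ P₂ P₃ : F)
    (h1 : P₁^2 + α*P₁ + β = 0) (h2 : P₂^2 + α*P₂ + β = 0) (h3 : P₃^2 + α*P₃ + β = 0) :
    P₁ = P₂ ∨ P₁ = P₃ ∨ P₂ = P₃ := by
  have key : ∀ P P' : F, P^2 + α*P + β = 0 → P'^2 + α*P' + β = 0 → P = P' ∨ P = P' + α := by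
    intro P P' hP hP'
    have hz : (P + P') * ((P + P') + α) = 0 := by
      linear_combination hP + hP' + (P*P' - β)*htwo
    rcases mul_eq_zero.mp hz with h | h
    · left; linear_combination h - P'*htwo
    · right; linear_combination h - P'*htwo - α*htwo
  rcases key P₁ P₂ h1 h2 with h12 | h12
  · exact Or.inl h12
  rcases key P₁ P₃ h1 h3 with h13 | h13
  · exact Or.inr (Or.inl h13)
  right; right
  linear_combination h13 - h12


lemma frob_add {F : Type*} [CommRing F] (htwo : (2:F) = 0) (j : ℕ) (u v : F) :
    (u + v) ^ (2^j) = u ^ (2^j) + v ^ (2^j) := by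
  induction j with
  | zero => simp
  | succ j ih =>
    have hsq : ∀ a b : F, (a+b)^2 = a^2 + b^2 := by
      intro a b; linear_combination (a*b)*htwo
    rw [pow_succ, pow_mul, pow_mul, pow_mul, ih, hsq]

lemma BL_inner {F : Type*} [Field F] (q : ℕ) (htwo : (2:F) = 0)
    (hfq : ∀ u v : F, (u+v)^q = u^q + v^q) (hq4 : ∀ x : F, x^(q^4) = x) (c : F) :
    ∃ t : Finset F, t.card ≤ 4 ∧
      ∀ u : F, (u+1)^(q^2+q+1) + u^(q^2+q+1) = c → u ∈ t := by
  classical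
  have hfq2 : ∀ u v : F, (u+v)^(q^2) = u^(q^2) + v^(q^2) := by
    intro u v; rw [sq q, pow_mul, pow_mul, pow_mul, hfq, hfq]
  -- E-expansion
  have hEext : ∀ u : F, (u+1)^(q^2+q+1) + u^(q^2+q+1) = c →
      ((u^q)^q)*(u^q) + ((u^q)^q)*u + (u^q)*u + ((u^q)^q) + u^q + u = c + 1 := by
    intro u hu
    rw [show q^2+q+1 = q^2+(q+1) by ring] at hu
    rw [pow_add, pow_add, pow_one, pow_add, pow_add, pow_one] at hu
    rw [hfq2, hfq, one_pow, one_pow] at hu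
    rw [sq q, pow_mul] at hu
    linear_combination hu - ((u^q)^q*(u^q)*u + 1)*htwo
  set d := q^2+q+1 with hd
  set C : F := (c+1)^q + ((c+1)^q)^q with hC
  set Cq2 : F := (C^q)^q with hCq2
  set D : F := C + Cq2 with hD
  -- every solution's P = u + u^q satisfies a fixed quadratic
  have main : ∀ u : F, (u+1)^d + u^d = c →
      (u + u^q)^2 + (D+1)*(u + u^q) + C = 0 := by
    intro u hu
    obtain ⟨y, hy⟩ : ∃ y, u^q = y := ⟨_, rfl⟩
    obtain ⟨u2, hu2⟩ : ∃ y2, y^q = y2 := ⟨_, rfl⟩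
    obtain ⟨w, hw⟩ : ∃ w, u2^q = w := ⟨_, rfl⟩
    have hwq : w^q = u := by
      rw [← hw, ← hu2, ← hy, ← pow_mul, ← pow_mul, ← pow_mul]
      rw [show q*(q*(q*q)) = q^4 by ring]; exact hq4 u
    have h1 : u2*y + u2*u + y*u + u2 + y + u = c + 1 := by
      have := hEext u hu; rwa [hy, hu2] at this
    have h2 : w*u2 + w*y + u2*y + w + u2 + y = (c+1)^q := by
      have := congrArg (·^q) h1
      rw [hfq, hfq, hfq, hfq, hfq, mul_pow, mul_pow, mul_pow, hy, hu2, hw] at this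
      exact this
    have h3 : u*w + u*u2 + w*u2 + u + w + u2 = ((c+1)^q)^q := by
      have := congrArg (·^q) h2
      rw [hfq, hfq, hfq, hfq, hfq, mul_pow, mul_pow, mul_pow, hwq, hw, hu2] at this
      exact this
    have key1 : (u+y)*(u2+w) + (u+y) = C := by
      rw [hC]; linear_combination h2 + h3 - (w*u2+w+u2)*htwo
    have key1q : (y+u2)*(w+u) + (y+u2) = C^q := by
      have := congrArg (·^q) key1
      rw [hfq, mul_pow, hfq, hfq, hy, hu2, hw, hwq] at this
      exact this
    have key2 : (u2+w)*(u+y) + (u2+w) = Cq2 := by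
      rw [hCq2]
      have := congrArg (·^q) key1q
      rw [hfq, mul_pow, hfq, hfq, hy, hu2, hw, hwq] at this
      exact this
    have hDeq : (u+y) + (u2+w) = D := by
      rw [hD]; linear_combination key1 + key2 - ((u+y)*(u2+w))*htwo
    rw [hy]
    linear_combination key1 + (u+y)*hDeq + ((u+y)*(C+Cq2) + C - (u+y)*(u2+w))*htwo
  -- solutions with the same P differ by 0 or 1
  have sameP : ∀ u u' : F, (u+1)^d + u^d = c → (u'+1)^d + u'^d = c →
      u + u^q = u' + u'^q → u' = u ∨ u' = u + 1 := by
    intro u u' hu hu' hP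
    obtain ⟨v, hv⟩ : ∃ v, u + u' = v := ⟨_, rfl⟩
    have hv' : u' = u + v := by rw [← hv]; linear_combination -u*htwo
    have hvq : v^q = v := by
      rw [← hv, hfq]; linear_combination -hP + (u^q - u')*htwo
    obtain ⟨y, hy⟩ : ∃ y, u^q = y := ⟨_, rfl⟩
    obtain ⟨u2, hu2⟩ : ∃ y2, y^q = y2 := ⟨_, rfl⟩
    have h1 : u2*y + u2*u + y*u + u2 + y + u = c + 1 := by
      have := hEext u hu; rwa [hy, hu2] at this
    have hy' : u'^q = y + v := by rw [hv', hfq, hy, hvq]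
    have hy2' : (u'^q)^q = u2 + v := by rw [hy', hfq, hu2, hvq]
    have h1' : (u2+v)*(y+v) + (u2+v)*(u+v) + (y+v)*(u+v) + (u2+v) + (y+v) + (u+v) = c + 1 := by
      have := hEext u' hu'
      rwa [hy2', hy', hv'] at this
    have hveq : v*(v+1) = 0 := by
      linear_combination h1' - h1 - (v*(y+u+u2) + v^2 + v)*htwo
    rcases mul_eq_zero.mp hveq with h | h
    · left; rw [hv', h, add_zero]
    · right; rw [hv']; congr 1; linear_combination h - htwo
  -- assemble the finset
  by_cases hex : ∃ u : F, (u+1)^d + u^d = c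
  · obtain ⟨u₁, hu₁⟩ := hex
    by_cases hex2 : ∃ u : F, ((u+1)^d + u^d = c) ∧ u + u^q ≠ u₁ + u₁^q
    · obtain ⟨u₂, hu₂, hP₂⟩ := hex2
      refine ⟨{u₁, u₁+1, u₂, u₂+1}, ?_, ?_⟩
      · apply le_trans (Finset.card_insert_le _ _)
        have := Finset.card_insert_le (u₁+1) ({u₂, u₂+1} : Finset F)
        have h2 := Finset.card_insert_le u₂ ({u₂+1} : Finset F)
        simp only [Finset.card_singleton] at *
        omega
      · intro u hu
        rcases quad_roots htwo (D+1) C (u+u^q) (u₁+u₁^q) (u₂+u₂^q)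
          (main u hu) (main u₁ hu₁) (main u₂ hu₂) with h | h | h
        · rcases sameP u₁ u hu₁ hu h.symm with h' | h' <;> simp [h']
        · rcases sameP u₂ u hu₂ hu h.symm with h' | h' <;> simp [h']
        · exact absurd h.symm hP₂
    · push_neg at hex2
      refine ⟨{u₁, u₁+1}, ?_, ?_⟩
      · apply le_trans (Finset.card_insert_le _ _); simp
      · intro u hu
        rcases sameP u₁ u hu₁ hu (hex2 u hu).symm with h' | h' <;> simp [h']
  · push_neg at hex
    exact ⟨∅, by simp, fun u hu => absurd hu (hex u)⟩

lemma BL_core {F : Type*} [Field F] [Fintype F] (k : ℕ) (hk : k ≠ 0)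
    (hcard : Fintype.card F = 2 ^ (4*k)) (a b : F) (ha : a ≠ 0) :
    ∃ t : Finset F, t.card ≤ 4 ∧
      ∀ z : F, (z+a)^(2^(2*k)+2^k+1) + z^(2^(2*k)+2^k+1) = b → z ∈ t := by
  classical
  have hn0 : 4*k ≠ 0 := by omega
  have htwo : (2:F) = 0 := by
    have h := FiniteField.cast_card_eq_zero F
    rw [hcard, Nat.cast_pow] at h
    exact (pow_eq_zero_iff hn0).mp h
  have hfq : ∀ u v : F, (u+v)^(2^k) = u^(2^k) + v^(2^k) := frob_add htwo k
  have hq4 : ∀ x : F, x^((2^k)^4) = x := by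
    intro x
    rw [show (2^k)^4 = 2^(4*k) by rw [← pow_mul, mul_comm], ← hcard]
    exact FiniteField.pow_card x
  have hexp : 2^(2*k)+2^k+1 = (2^k)^2 + 2^k + 1 := by rw [mul_comm 2 k, pow_mul]
  obtain ⟨t, htc, ht⟩ := BL_inner (2^k) htwo hfq hq4 (b / a^((2^k)^2+2^k+1))
  refine ⟨t.image (a * ·), le_trans Finset.card_image_le htc, ?_⟩
  intro z hz
  rw [hexp] at hz
  set d := (2^k)^2+2^k+1 with hd
  have had : a^d ≠ 0 := pow_ne_zero _ ha
  have hu : (z/a + 1)^d + (z/a)^d = b / a^d := by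
    have e1 : z/a + 1 = (z+a)/a := by field_simp
    rw [e1, div_pow, div_pow, ← add_div, hz]
  exact Finset.mem_image.mpr ⟨z/a, ht _ hu, by field_simp⟩

lemma NOS {F : Type*} [Field F] [Fintype F] (k s m : ℕ) (hk : k ≠ 0) (hm : Odd m)
    (hsm : s * m = 4 * k) (hcard : Fintype.card F = 2 ^ (4*k))
    (a b : F) (haS : a^(2^s) = a) (ha : a ≠ 0) (hbS : b^(2^s) = b)
    (z : F) (hz : (z+a)^(2^(2*k)+2^k+1) + z^(2^(2*k)+2^k+1) = b) :
    z^(2^s) = z := by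
  classical
  have hn0 : 4*k ≠ 0 := by omega
  have htwo : (2:F) = 0 := by
    have h := FiniteField.cast_card_eq_zero F
    rw [hcard, Nat.cast_pow] at h
    exact (pow_eq_zero_iff hn0).mp h
  set d := 2^(2*k)+2^k+1 with hd
  set σ : F → F := fun x => x^(2^s) with hσdef
  have hσadd : ∀ u v : F, σ (u+v) = σ u + σ v := fun u v => frob_add htwo s u v
  have hσpow : ∀ (x : F) (e : ℕ), σ (x^e) = (σ x)^e := fun x e => pow_right_comm x e (2^s)
  have hσa : σ a = a := haS
  have hσb : σ b = b := hbS
  have hitadd : ∀ (j : ℕ) (u v : F), σ^[j] (u+v) = σ^[j] u + σ^[j] v := by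
    intro j
    induction j with
    | zero => simp
    | succ j ih =>
      intro u v
      rw [Function.iterate_succ_apply', Function.iterate_succ_apply',
        Function.iterate_succ_apply', ih, hσadd]
  have hita : ∀ j : ℕ, σ^[j] a = a := by
    intro j
    induction j with
    | zero => rfl
    | succ j ih => rw [Function.iterate_succ_apply', ih, hσa]
  have hit : ∀ (j : ℕ) (x : F), σ^[j] x = x^(2^(s*j)) := by
    intro j
    induction j with
    | zero => intro x; simp
    | succ j ih =>
      intro x
      rw [Function.iterate_succ_apply', ih, hσdef]
      simp only []
      rw [← pow_mul, ← pow_add, Nat.mul_succ]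
  have hσm : ∀ x : F, σ^[m] x = x := by
    intro x
    rw [hit, show s*m = 4*k from hsm, ← hcard]
    exact FiniteField.pow_card x
  have hitm : ∀ (j : ℕ) (x : F), σ^[m*j] x = x := by
    intro j x
    induction j with
    | zero => rfl
    | succ j ih => rw [Nat.mul_succ, Function.iterate_add_apply, hσm, ih]
  have hsol : ∀ w : F, (w+a)^d + w^d = b → (σ w + a)^d + (σ w)^d = b := by
    intro w hw
    have h := congrArg σ hw
    rw [hσadd, hσpow, hσpow, hσadd, hσa, hσb] at h
    exact h
  have hsola : ∀ w : F, (w+a)^d + w^d = b → ((w+a)+a)^d + (w+a)^d = b := by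
    intro w hw
    rw [show w+a+a = w by linear_combination a*htwo]
    linear_combination hw
  by_cases hm1 : m = 1
  · have := hσm z
    rw [hm1, Function.iterate_one] at this
    exact this
  obtain ⟨r, hr⟩ := hm
  have hm3 : 3 ≤ m := by omega
  by_contra hzS
  have hne1 : σ z ≠ z := hzS
  have hconst : σ (σ z) = σ z → ∀ j : ℕ, σ^[j+1] z = σ z := by
    intro h j
    induction j with
    | zero => exact Function.iterate_one σ ▸ rfl
    | succ j ih => rw [Function.iterate_succ_apply', ih, h]
  have hne2 : σ (σ z) ≠ σ z := by
    intro h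
    apply hne1
    have h1 : σ^[(m-1)+1] z = σ z := hconst h (m-1)
    rw [show m-1+1 = m by omega, hσm] at h1
    rw [← h1]
  have it2 : ∀ x : F, σ^[2] x = σ (σ x) := by
    intro x
    rw [Function.iterate_succ_apply', Function.iterate_one]
  have hne02 : σ (σ z) ≠ z := by
    intro h
    apply hne1
    have heven : ∀ j : ℕ, σ^[2*j] z = z := by
      intro j
      induction j with
      | zero => rfl
      | succ j ih =>
        rw [show 2*(j+1) = 2 + 2*j by ring, Function.iterate_add_apply, ih, it2]
        exact h
    have h1 : σ^[2*(r+1)] z = z := heven (r+1)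
    rw [show 2*(r+1) = 1 + m by omega, Function.iterate_add_apply, hσm,
      Function.iterate_one] at h1
    exact h1
  have H : ∀ (w : F) (t : ℕ), 0 < t → σ^[t] w = w + a → False := by
    intro w t ht hwt
    have hstep : ∀ u : F, σ^[t] u = u + a → σ^[t] (u + a) = u := by
      intro u hu
      rw [hitadd, hita, hu]
      linear_combination a*htwo
    have hpar : ∀ j : ℕ, σ^[t*(2*j)] w = w ∧ σ^[t*(2*j+1)] w = w + a := by
      intro j
      induction j with
      | zero => refine ⟨rfl, ?_⟩; rw [show t*(2*0+1) = t by ring]; exact hwt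
      | succ j ih =>
        obtain ⟨h0, h1⟩ := ih
        have e1 : σ^[t*(2*(j+1))] w = w := by
          rw [show t*(2*(j+1)) = t + t*(2*j+1) by ring, Function.iterate_add_apply, h1]
          exact hstep w hwt
        refine ⟨e1, ?_⟩
        rw [show t*(2*(j+1)+1) = t + t*(2*(j+1)) by ring, Function.iterate_add_apply, e1]
        exact hwt
    have h1 : σ^[t*m] w = w + a := by
      have := (hpar r).2
      rwa [← hr] at this
    have h2 : σ^[t*m] w = w := by rw [show t*m = m*t by ring]; exact hitm t w
    exact ha (by linear_combination h2 - h1)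
  have G : ∀ i i' : ℕ, i ≤ 2 → i' ≤ 2 → σ^[i] z = σ^[i'] z + a → False := by
    intro i i' hi hi' heq
    have happ := congrArg (σ^[m-i]) heq
    rw [← Function.iterate_add_apply, hitadd, ← Function.iterate_add_apply, hita] at happ
    rw [show m-i+i = m by omega, hσm] at happ
    by_cases h0 : m - i + i' = m
    · rw [h0, hσm] at happ
      exact ha (by linear_combination -happ)
    rcases Nat.lt_or_ge (m-i+i') m with hlt | hge
    · refine H z (m-i+i') (by omega) ?_
      linear_combination -happ - a*htwo
    · have hgt : m < m-i+i' := by omega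
      rw [show m-i+i' = (m-i+i'-m) + m by omega, Function.iterate_add_apply, hσm] at happ
      refine H z (m-i+i'-m) (by omega) ?_
      linear_combination -happ - a*htwo
  obtain ⟨t4, ht4c, ht4⟩ := BL_core k hk hcard a b ha
  have hz1 : (σ z + a)^d + (σ z)^d = b := hsol z hz
  have hz2 : (σ (σ z) + a)^d + (σ (σ z))^d = b := hsol _ hz1
  have hmemA : ∀ w : F, (w+a)^d + w^d = b → w ∈ t4 := fun w hw => ht4 w hw
  set A : Finset F := {z, σ z, σ (σ z)} with hA
  set B : Finset F := {z+a, σ z + a, σ (σ z) + a} with hB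
  have hAc : A.card = 3 := by
    rw [hA, Finset.card_insert_of_notMem (by simp [Ne.symm hne1, Ne.symm hne02]),
      Finset.card_insert_of_notMem (by simp [Ne.symm hne2]), Finset.card_singleton]
  have hBc : B.card = 3 := by
    rw [hB, Finset.card_insert_of_notMem (by simp [Ne.symm hne1, Ne.symm hne02]),
      Finset.card_insert_of_notMem (by simp [Ne.symm hne2]), Finset.card_singleton]
  have hsubA : A ⊆ t4 := by
    intro w hw
    rw [hA] at hw
    simp only [Finset.mem_insert, Finset.mem_singleton] at hw
    rcases hw with rfl | rfl | rfl
    · exact ht4 _ hz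
    · exact ht4 _ hz1
    · exact ht4 _ hz2
  have hsubB : B ⊆ t4 := by
    intro w hw
    rw [hB] at hw
    simp only [Finset.mem_insert, Finset.mem_singleton] at hw
    rcases hw with rfl | rfl | rfl
    · exact ht4 _ (hsola _ hz)
    · exact ht4 _ (hsola _ hz1)
    · exact ht4 _ (hsola _ hz2)
  have hU : (A ∪ B).card ≤ 4 := le_trans (Finset.card_le_card (Finset.union_subset hsubA hsubB)) ht4c
  have hIc : 2 ≤ (A ∩ B).card := by
    have := Finset.card_union_add_card_inter A B
    omega
  obtain ⟨e, he⟩ := Finset.card_pos.mp (by omega : 0 < (A ∩ B).card)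
  have heA : e = z ∨ e = σ z ∨ e = σ (σ z) := by
    have := (Finset.mem_inter.mp he).1
    simpa [hA] using this
  have heB : e = z + a ∨ e = σ z + a ∨ e = σ (σ z) + a := by
    have := (Finset.mem_inter.mp he).2
    simpa [hB] using this
  have e0 : σ^[0] z = z := rfl
  have e1 : σ^[1] z = σ z := Function.iterate_one σ ▸ rfl
  have e2 : σ^[2] z = σ (σ z) := by
    rw [Function.iterate_succ_apply', Function.iterate_one]
  rcases heA with h | h | h <;> rcases heB with h' | h' | h'
  · exact G 0 0 (by omega) (by omega) (by rw [e0]; exact h.symm.trans h')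
  · exact G 0 1 (by omega) (by omega) (by rw [e0, e1]; exact h.symm.trans h')
  · exact G 0 2 (by omega) (by omega) (by rw [e0, e2]; exact h.symm.trans h')
  · exact G 1 0 (by omega) (by omega) (by rw [e0, e1]; exact h.symm.trans h')
  · exact G 1 1 (by omega) (by omega) (by rw [e1]; exact h.symm.trans h')
  · exact G 1 2 (by omega) (by omega) (by rw [e1, e2]; exact h.symm.trans h')
  · exact G 2 0 (by omega) (by omega) (by rw [e0, e2]; exact h.symm.trans h')
  · exact G 2 1 (by omega) (by omega) (by rw [e1, e2]; exact h.symm.trans h')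
  · exact G 2 2 (by omega) (by omega) (by rw [e2]; exact h.symm.trans h')

lemma BL_coprime (k : ℕ) (hk : Odd k) :
    Nat.Coprime (2^(2*k)+2^k+1) (2^(4*k)-1) := by
  obtain ⟨j, hj⟩ := hk
  have hq2 : 2 ≤ 2^k := by
    calc (2:ℕ) = 2^1 := rfl
    _ ≤ 2^k := Nat.pow_le_pow_right (by omega) (by omega)
  obtain ⟨q', hq'⟩ : ∃ q', 2^k = q'+2 := ⟨2^k - 2, by omega⟩
  have hd : 2^(2*k)+2^k+1 = (2^k)^2+2^k+1 := by rw [mul_comm 2 k, pow_mul]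
  have hfact : 2^(4*k)-1 = (2^k-1)*((2^k+1)*((2^k)^2+1)) := by
    have h4 : 2^(4*k) = (2^k)^4 := by rw [mul_comm 4 k, pow_mul]
    rw [h4, hq']
    rw [Nat.sub_eq_iff_eq_add (Nat.one_le_pow _ _ (by omega))]
    have e : (q'+2) - 1 = q'+1 := by omega
    rw [e]; ring
  rw [hd, hfact]
  have c1 : Nat.Coprime ((2^k)^2+2^k+1) (2^k+1) := by
    have := (Nat.coprime_add_mul_left_left 1 (2^k+1) (2^k)).mpr (Nat.coprime_one_left _)
    rwa [show 1+(2^k+1)*(2^k) = (2^k)^2+2^k+1 by ring] at this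
  have c2 : Nat.Coprime ((2^k)^2+2^k+1) ((2^k)^2+1) := by
    have h0 : Nat.Coprime (2^k) ((2^k)^2+1) := by
      have := (Nat.coprime_add_mul_left_left 1 (2^k) (2^k)).mpr (Nat.coprime_one_left _)
      rw [show 1+(2^k)*(2^k) = (2^k)^2+1 by ring] at this
      exact this.symm
    have := (Nat.coprime_add_mul_left_left (2^k) ((2^k)^2+1) 1).mpr h0
    rwa [show 2^k+((2^k)^2+1)*1 = (2^k)^2+2^k+1 by ring] at this
  have c3 : Nat.Coprime ((2^k)^2+2^k+1) (2^k-1) := by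
    have h3 : 2^k % 3 = 2 := by
      have h4j : 4^j % 3 = 1 := by
        rw [Nat.pow_mod]; norm_num
      have : 2^k = 4^j*2 := by
        rw [hj, pow_add, pow_mul]; norm_num
      omega
    have hc3 : Nat.Coprime 3 (q'+1) := by
      rw [Nat.Prime.coprime_iff_not_dvd Nat.prime_three]
      intro hdvd
      omega
    have := (Nat.coprime_add_mul_left_left 3 (q'+1) (q'+4)).mpr hc3
    rw [show 3+(q'+1)*(q'+4) = (q'+2)^2+(q'+2)+1 by ring] at this
    rw [hq', show q'+2-1 = q'+1 by omega]
    exact this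
  exact c3.mul_right (c1.mul_right c2)

/-- Let `n = 4k = s·m` with `k`, `m` odd and `s` even. Let `F = F_{2^n}`,
`S = F_{2^s}`, and let `f` be a permutation of `S` which is differentially at most 6-uniform
on `S`. Then the piecewise function `Fn` (equal to `f` on `S` and to the Bracken–Leander
function `x^(2^{2k}+2^k+1)` off `S`) is a permutation of `F` with differential uniformity
at most 6. -/
theorem stmt5 {F : Type*} [Field F] [Fintype F] (n s m k : ℕ)
    (hn4 : n = 4 * k) (hn : n = s * m) (hkodd : Odd k) (hm : Odd m) (hs : Even s)
    (hcard : Fintype.card F = 2 ^ n)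
    (S : Set F) (hS : S = {x : F | x ^ (2 ^ s) = x})
    (f : F → F) (hfperm : Set.BijOn f S S)
    (hf6 : ∀ a ∈ S, a ≠ 0 → ∀ b ∈ S, deltaOn S f a b ≤ 6)
    (Fn : F → F)
    (hFn1 : ∀ x ∈ S, Fn x = f x)
    (hFn2 : ∀ x ∉ S, Fn x = x ^ (2 ^ (2 * k) + 2 ^ k + 1)) :
    Function.Bijective Fn ∧ ∀ a b : F, a ≠ 0 → delta Fn a b ≤ 6 := by
  classical
  have hk0 : k ≠ 0 := by rcases hkodd with ⟨j, hj⟩; omega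
  have hn0 : n ≠ 0 := by omega
  have hcard4 : Fintype.card F = 2^(4*k) := by rw [hcard, hn4]
  have hsm : s * m = 4*k := by rw [← hn4, ← hn]
  have htwo : (2:F) = 0 := by
    have h := FiniteField.cast_card_eq_zero F
    rw [hcard, Nat.cast_pow] at h
    exact (pow_eq_zero_iff hn0).mp h
  set d := 2^(2*k)+2^k+1 with hd
  have hd0 : d ≠ 0 := by positivity
  have hSmem : ∀ x : F, x ∈ S ↔ x^(2^s) = x := fun x => by rw [hS]; exact Iff.rfl
  have hSadd : ∀ x y : F, x ∈ S → y ∈ S → x + y ∈ S := by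
    intro x y hx hy
    rw [hSmem] at *
    rw [frob_add htwo s, hx, hy]
  have hSpow : ∀ (x : F) (e : ℕ), x ∈ S → x^e ∈ S := by
    intro x e hx
    rw [hSmem] at *
    rw [pow_right_comm, hx]
  have hcancel : ∀ x y : F, x + y + y = x := by
    intro x y; linear_combination y*htwo
  have hxaS : ∀ a x : F, a ∈ S → (x + a ∈ S ↔ x ∈ S) := by
    intro a x ha
    constructor
    · intro h
      have := hSadd _ _ h ha
      rwa [hcancel] at this
    · intro h; exact hSadd _ _ h ha
  -- the power map
  have hdcop : Nat.Coprime d (Fintype.card F - 1) := by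
    rw [hcard4]; exact BL_coprime k hkodd
  have hginj : Function.Injective (fun x : F => x^d) := by
    intro x y hxy
    simp only at hxy
    by_cases hy0 : y = 0
    · subst hy0
      rw [zero_pow hd0] at hxy
      exact pow_eq_zero_iff hd0 |>.mp hxy
    have hx0 : x ≠ 0 := by
      intro h; subst h
      rw [zero_pow hd0] at hxy
      exact hy0 ((pow_eq_zero_iff hd0).mp hxy.symm)
    have hu : (x * y⁻¹)^d = 1 := by
      rw [mul_pow, hxy, inv_pow, mul_inv_cancel₀ (pow_ne_zero d hy0)]
    have h1 : (x*y⁻¹)^(Fintype.card F - 1) = 1 :=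
      FiniteField.pow_card_sub_one_eq_one _ (mul_ne_zero hx0 (inv_ne_zero hy0))
    have ho1 := orderOf_dvd_of_pow_eq_one hu
    have ho2 := orderOf_dvd_of_pow_eq_one h1
    have : orderOf (x*y⁻¹) ∣ 1 := hdcop ▸ Nat.dvd_gcd ho1 ho2
    have : x*y⁻¹ = 1 := orderOf_eq_one_iff.mp (Nat.dvd_one.mp this)
    exact (mul_inv_eq_one₀ hy0).mp this
  have hgS : ∀ x : F, x ∈ S → x^d ∈ S := fun x hx => hSpow x d hx
  have hbijS : Set.BijOn (fun x : F => x^d) S S :=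
    (Set.Finite.injOn_iff_bijOn_of_mapsTo (Set.toFinite S) hgS).mp (hginj.injOn)
  have hgSc : ∀ x : F, x ∉ S → x^d ∉ S := by
    intro x hx hc
    obtain ⟨x', hx', hxx⟩ := hbijS.surjOn hc
    exact hx (hginj hxx ▸ hx')
  have hFninj : Function.Injective Fn := by
    intro x y hxy
    by_cases hx : x ∈ S <;> by_cases hy : y ∈ S
    · rw [hFn1 x hx, hFn1 y hy] at hxy
      exact hfperm.injOn hx hy hxy
    · exfalso
      rw [hFn1 x hx, hFn2 y hy] at hxy
      exact hgSc y hy (hxy ▸ hfperm.mapsTo hx)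
    · exfalso
      rw [hFn2 x hx, hFn1 y hy] at hxy
      exact hgSc x hx (hxy.symm ▸ hfperm.mapsTo hy)
    · rw [hFn2 x hx, hFn2 y hy] at hxy
      exact hginj hxy
  refine ⟨Finite.injective_iff_bijective.mp hFninj, ?_⟩
  intro a b ha
  have hdelta : delta Fn a b = Set.ncard {x : F | Fn (x+a) + Fn x = b} :=
    Nat.card_coe_set_eq _
  by_cases haS : a ∈ S
  · by_cases hbS : b ∈ S
    · -- all solutions are in S
      have heq : ∀ x : F, (Fn (x+a) + Fn x = b) ↔ (x ∈ S ∧ f (x+a) + f x = b) := by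
        intro x
        constructor
        · intro h
          have hxS : x ∈ S := by
            by_contra hxS
            have hxaS' : x + a ∉ S := fun hc => hxS ((hxaS a x haS).mp hc)
            rw [hFn2 _ hxaS', hFn2 _ hxS] at h
            have := NOS k s m hk0 hm hsm hcard4 a b ((hSmem a).mp haS) ha
              ((hSmem b).mp hbS) x h
            exact hxS ((hSmem x).mpr this)
          refine ⟨hxS, ?_⟩
          rw [hFn1 _ ((hxaS a x haS).mpr hxS), hFn1 _ hxS] at h
          exact h
        · rintro ⟨hxS, h⟩
          rw [hFn1 _ ((hxaS a x haS).mpr hxS), hFn1 _ hxS]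
          exact h
      have hde : delta Fn a b = deltaOn S f a b :=
        Nat.card_congr (Equiv.subtypeEquivRight heq)
      rw [hde]
      exact hf6 a haS ha b hbS
    · -- b ∉ S : at most 4
      obtain ⟨t, htc, ht⟩ := BL_core k hk0 hcard4 a b ha
      have hsub : {x : F | Fn (x+a) + Fn x = b} ⊆ ↑t := by
        intro x hx
        simp only [Set.mem_setOf_eq] at hx
        have hxS : x ∉ S := by
          intro hxS
          have hxaS' : x + a ∈ S := (hxaS a x haS).mpr hxS
          rw [hFn1 _ hxaS', hFn1 _ hxS] at hx
          exact hbS (hx ▸ hSadd _ _ (hfperm.mapsTo hxaS') (hfperm.mapsTo hxS))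
        have hxaS' : x + a ∉ S := fun hc => hxS ((hxaS a x haS).mp hc)
        rw [hFn2 _ hxaS', hFn2 _ hxS] at hx
        exact ht x hx
      rw [hdelta]
      calc Set.ncard {x : F | Fn (x+a) + Fn x = b} ≤ (↑t : Set F).ncard :=
            Set.ncard_le_ncard hsub (Set.toFinite _)
        _ = t.card := Set.ncard_coe_finset t
        _ ≤ 6 := by omega
  · -- a ∉ S
    obtain ⟨t, htc, ht⟩ := BL_core k hk0 hcard4 a b ha
    have hanz : ∀ x : F, x ∈ S → x + a ∉ S := by
      intro x hx hc
      have := hSadd _ _ hc hx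
      rw [show x + a + x = a by linear_combination x*htwo] at this
      exact haS this
    have hanz' : ∀ x : F, x + a ∈ S → x ∉ S := by
      intro x hc hx
      exact hanz x hx hc
    set T1 : Set F := {x : F | x ∈ S ∧ Fn (x+a) + Fn x = b} with hT1def
    set T2 : Set F := {x : F | x + a ∈ S ∧ Fn (x+a) + Fn x = b} with hT2def
    have hsub : {x : F | Fn (x+a) + Fn x = b} ⊆ (T1 ∪ T2) ∪ ↑t := by
      intro x hx
      simp only [Set.mem_setOf_eq] at hx
      by_cases hxS : x ∈ S
      · exact Or.inl (Or.inl ⟨hxS, hx⟩)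
      by_cases hxaS' : x + a ∈ S
      · exact Or.inl (Or.inr ⟨hxaS', hx⟩)
      · rw [hFn2 _ hxaS', hFn2 _ hxS] at hx
        exact Or.inr (ht x hx)
    have hT1 : T1.ncard ≤ 1 := by
      rw [Set.ncard_le_one (Set.toFinite _)]
      rintro x1 ⟨hx1S, hx1⟩ x2 ⟨hx2S, hx2⟩
      by_contra hne
      rw [hFn2 _ (hanz _ hx1S), hFn1 _ hx1S] at hx1
      rw [hFn2 _ (hanz _ hx2S), hFn1 _ hx2S] at hx2
      have ha' : x1 + x2 ∈ S := hSadd _ _ hx1S hx2S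
      have ha'0 : x1 + x2 ≠ 0 := by
        intro h
        exact hne (by linear_combination h - x2*htwo)
      have hb' : f x1 + f x2 ∈ S := hSadd _ _ (hfperm.mapsTo hx1S) (hfperm.mapsTo hx2S)
      have hbl : ((x2 + a) + (x1 + x2))^d + (x2 + a)^d = f x1 + f x2 := by
        rw [show (x2 + a) + (x1 + x2) = x1 + a by linear_combination x2*htwo]
        linear_combination hx1 - hx2 + ((x2+a)^d - f x1)*htwo
      have := NOS k s m hk0 hm hsm hcard4 (x1+x2) (f x1 + f x2)
        ((hSmem _).mp ha') ha'0 ((hSmem _).mp hb') (x2+a) hbl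
      exact hanz _ hx2S ((hSmem _).mpr this)
    have hT2 : T2.ncard ≤ 1 := by
      rw [Set.ncard_le_one (Set.toFinite _)]
      rintro x1 ⟨hx1S, hx1⟩ x2 ⟨hx2S, hx2⟩
      by_contra hne
      rw [hFn1 _ hx1S, hFn2 _ (hanz' _ hx1S)] at hx1
      rw [hFn1 _ hx2S, hFn2 _ (hanz' _ hx2S)] at hx2
      have ha' : x1 + x2 ∈ S := by
        have := hSadd _ _ hx1S hx2S
        rwa [show (x1+a) + (x2+a) = x1 + x2 by linear_combination a*htwo] at this
      have ha'0 : x1 + x2 ≠ 0 := by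
        intro h
        exact hne (by linear_combination h - x2*htwo)
      have hb' : f (x1+a) + f (x2+a) ∈ S :=
        hSadd _ _ (hfperm.mapsTo hx1S) (hfperm.mapsTo hx2S)
      have hbl : (x2 + (x1 + x2))^d + x2^d = f (x1+a) + f (x2+a) := by
        rw [show x2 + (x1 + x2) = x1 by linear_combination x2*htwo]
        linear_combination hx1 - hx2 + (x2^d - f (x1+a))*htwo
      have := NOS k s m hk0 hm hsm hcard4 (x1+x2) (f (x1+a) + f (x2+a))
        ((hSmem _).mp ha') ha'0 ((hSmem _).mp hb') x2 hbl
      exact (hanz' _ hx2S) ((hSmem _).mpr this)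
    rw [hdelta]
    calc Set.ncard {x : F | Fn (x+a) + Fn x = b} ≤ ((T1 ∪ T2) ∪ ↑t).ncard :=
          Set.ncard_le_ncard hsub (Set.toFinite _)
      _ ≤ (T1 ∪ T2).ncard + (↑t : Set F).ncard := Set.ncard_union_le _ _
      _ ≤ (T1.ncard + T2.ncard) + (↑t : Set F).ncard := by
          have := Set.ncard_union_le T1 T2
          omega
      _ ≤ 1 + 1 + t.card := by
          rw [Set.ncard_coe_finset]
          omega
      _ ≤ 6 := by omega
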